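/- arXiv:1506.01068 — 2 statements merged into one kernel-verified Lean document; each statement's English description precedes it below -/
import Mathlib

section
/- Let (f_η)_{η<λ} be a decreasing transfinite sequence of non-negative bounded functions, and θ ≤ λ even. Then for every even ζ with θ ≤ ζ ≤ λ, 0 ≤ Σ*_{η<ζ} (−1)^η f_η − Σ*_{η<θ} (−1)^η f_η ≤ f_θ − f_ζ pointwise. -/
open Set Filter Topology

noncomputable section

/-- Oscillation of `f` at `x` restricted to `F`. -/
def osc {X : Type*} [TopologicalSpace X] (f : X → ℝ) (x : X) (F : Set X) : ENNReal :=
  ⨅ (U : Set X) (_ : IsOpen U) (_ : x ∈ U),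
    ⨆ (y) (_ : y ∈ U ∩ F) (z) (_ : z ∈ U ∩ F), ENNReal.ofReal |f y - f z|

/-- Oscillation derivative. -/
def oscDeriv {X : Type*} [TopologicalSpace X] (f : X → ℝ) (ε : ℝ) (F : Set X) : Set X :=
  {x ∈ F | ENNReal.ofReal ε ≤ osc f x F}

/-- Iterated derivatives of a set operation. -/
def iterD {X : Type*} (D : Set X → Set X) (F : Set X) (o : Ordinal.{0}) : Set X :=
  Ordinal.limitRecOn o F (fun _ ih => D ih) (fun o _ ih => ⋂ (η : Ordinal.{0}) (h : η < o), ih η h)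

open Classical in
/-- Rank of a derivative: least `θ` with `D^θ(X) = ∅`, or `ω₁` if there is none. -/
def rkD {X : Type*} (D : Set X → Set X) : Ordinal.{0} :=
  if ∃ θ, iterD D Set.univ θ = ∅ then sInf {θ | iterD D Set.univ θ = ∅}
  else (Cardinal.aleph 1).ord

/-- Oscillation rank. -/
def betaRank {X : Type*} [TopologicalSpace X] (f : X → ℝ) : Ordinal.{0} :=
  ⨆ ε : {ε : ℝ // 0 < ε}, rkD (oscDeriv f ε.1)

/-- Oscillation of a sequence of functions. -/
def oscSeq {X : Type*} [TopologicalSpace X] (f : ℕ → X → ℝ) (x : X) (F : Set X) : ENNReal :=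
  ⨅ (U : Set X) (_ : IsOpen U) (_ : x ∈ U) (N : ℕ),
    ⨆ (m) (_ : N ≤ m) (n) (_ : N ≤ n) (y) (_ : y ∈ U ∩ F), ENNReal.ofReal |f m y - f n y|

def oscSeqDeriv {X : Type*} [TopologicalSpace X] (f : ℕ → X → ℝ) (ε : ℝ) (F : Set X) : Set X :=
  {x ∈ F | ENNReal.ofReal ε ≤ oscSeq f x F}

/-- Convergence rank of a sequence. -/
def gammaRank {X : Type*} [TopologicalSpace X] (f : ℕ → X → ℝ) : Ordinal.{0} :=
  ⨆ ε : {ε : ℝ // 0 < ε}, rkD (oscSeqDeriv f ε.1)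

/-- Alternating transfinite sum `Σ*_{η<θ} (−1)^η f_η`. -/
def altSum {X : Type*} (f : Ordinal.{0} → X → ℝ) (θ : Ordinal.{0}) : X → ℝ :=
  Ordinal.limitRecOn θ (fun _ => 0)
    (fun η ih x => ih x + (if η % 2 = 0 then f η x else - f η x))
    (fun θ _ ih x => sSup {y | ∃ ζ, ∃ h : ζ < θ, ζ % 2 = 0 ∧ ih ζ h x = y})

/-- The `ξ`-th additive Borel class. -/
def Sigma0 {X : Type*} [TopologicalSpace X] (ξ : Ordinal.{0}) : Set (Set X) :=
  {s | IsOpen s} ∪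
  {s | ∃ g : ℕ → Set X,
        (∀ n, ∃ η, ∃ _ : η < ξ, 1 ≤ η ∧ (g n)ᶜ ∈ Sigma0 η) ∧ s = ⋃ n, g n}
termination_by ξ

/-- Baire class `ξ` functions. -/
def BaireClass {X : Type*} [TopologicalSpace X] (ξ : Ordinal.{0}) (f : X → ℝ) : Prop :=
  (ξ = 0 ∧ Continuous f) ∨
  (1 ≤ ξ ∧ ∃ g : ℕ → X → ℝ,
      (∀ n, ∃ η, ∃ _ : η < ξ, BaireClass η (g n)) ∧
      ∀ x, Tendsto (fun n => g n x) atTop (𝓝 (f x)))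
termination_by ξ


lemma altSum_succ {X : Type*} (f : Ordinal.{0} → X → ℝ) (η : Ordinal.{0}) :
    altSum f (Order.succ η) = fun x => altSum f η x + (if η % 2 = 0 then f η x else - f η x) := by
  simp [altSum, Ordinal.limitRecOn_succ]

lemma altSum_limit {X : Type*} (f : Ordinal.{0} → X → ℝ) (θ : Ordinal.{0}) (h : Order.IsSuccLimit θ) :
    altSum f θ = fun x => sSup {y | ∃ ζ, ∃ _ : ζ < θ, ζ % 2 = 0 ∧ altSum f ζ x = y} := by
  simp [altSum, Ordinal.limitRecOn_limit _ _ _ _ h]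

lemma succ_mod_two {μ : Ordinal.{0}} (h : μ % 2 = 0) : Order.succ μ % 2 = 1 := by
  have := Ordinal.div_add_mod μ 2
  rw [h, add_zero] at this
  have : Order.succ μ = 2 * (μ / 2) + 1 := by
    rw [Ordinal.add_one_eq_succ] at *; rw [this]
  rw [this, Ordinal.mul_add_mod_self, Ordinal.mod_eq_of_lt one_lt_two]

lemma odd_succ {ξ : Ordinal.{0}} (h : ξ % 2 = 1) :
    ∃ μ, ξ = Order.succ μ ∧ μ % 2 = 0 := by
  refine ⟨2 * (ξ / 2), ?_, ?_⟩
  · have := Ordinal.div_add_mod ξ 2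
    rw [h] at this
    rw [← Ordinal.add_one_eq_succ]
    exact this.symm
  · simpa using Ordinal.mul_add_mod_self 2 (ξ / 2) 0

lemma mod_two_cases (ξ : Ordinal.{0}) : ξ % 2 = 0 ∨ ξ % 2 = 1 := by
  have h2 : (2 : Ordinal.{0}) ≠ 0 := two_ne_zero
  have := Ordinal.mod_lt ξ h2
  have : ξ % 2 ≤ 1 := Order.lt_succ_iff.mp (by simpa [← Ordinal.add_one_eq_succ, one_add_one_eq_two] using this)
  rcases Ordinal.le_one_iff.mp this with h | h
  · exact Or.inl h
  · exact Or.inr h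

lemma altSum_key {X : Type*} (lam : Ordinal.{0}) (f : Ordinal.{0} → X → ℝ)
    (hmono : ∀ η ζ : Ordinal.{0}, η ≤ ζ → ζ ≤ lam → ∀ x, f ζ x ≤ f η x)
    (hnn : ∀ η : Ordinal.{0}, η ≤ lam → ∀ x, 0 ≤ f η x) :
    ∀ ζ : Ordinal.{0}, ζ % 2 = 0 → ζ ≤ lam → ∀ θ, θ % 2 = 0 → θ ≤ ζ → ∀ x,
      0 ≤ altSum f ζ x - altSum f θ x ∧ altSum f ζ x - altSum f θ x ≤ f θ x - f ζ x := by
  intro ζ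
  induction ζ using Ordinal.induction with
  | _ ζ IH =>
    intro hζ hζl θ hθ hθζ x
    rcases eq_or_lt_of_le hθζ with rfl | hlt
    · simp
    rcases Ordinal.zero_or_succ_or_isSuccLimit ζ with rfl | ⟨ξ, rfl⟩ | hl
    · exact absurd hlt (by simp)
    · -- successor case
      have hξodd : ξ % 2 = 1 := by
        rcases mod_two_cases ξ with h | h
        · rw [succ_mod_two h] at hζ; exact absurd hζ one_ne_zero
        · exact h
      obtain ⟨μ, rfl, hμ⟩ := odd_succ hξodd
      have hμsl : Order.succ μ ≤ lam :=
        le_trans (le_of_lt (Order.lt_succ _)) hζl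
      have hμl : μ ≤ lam := le_trans (le_of_lt (Order.lt_succ _)) hμsl
      have hθμ : θ ≤ μ := by
        have h1 : θ ≤ Order.succ μ := Order.lt_succ_iff.mp hlt
        rcases eq_or_lt_of_le h1 with rfl | h2
        · rw [succ_mod_two hμ] at hθ; exact absurd hθ one_ne_zero
        · exact Order.lt_succ_iff.mp h2
      have hIH := IH μ (lt_trans (Order.lt_succ _) (Order.lt_succ _)) hμ hμl θ hθ hθμ x
      have e1 : altSum f (Order.succ (Order.succ μ)) x
          = altSum f (Order.succ μ) x - f (Order.succ μ) x := by
        rw [altSum_succ, succ_mod_two hμ]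
        simp [succ_mod_two hμ, sub_eq_add_neg]
      have e2 : altSum f (Order.succ μ) x = altSum f μ x + f μ x := by
        rw [altSum_succ]; simp [hμ]
      have m1 : f (Order.succ (Order.succ μ)) x ≤ f (Order.succ μ) x :=
        hmono _ _ (le_of_lt (Order.lt_succ _)) hζl x
      have m2 : f (Order.succ μ) x ≤ f μ x :=
        hmono _ _ (le_of_lt (Order.lt_succ _)) hμsl x
      constructor <;> [skip; skip] <;>
        · rw [e1, e2]
          obtain ⟨h1, h2⟩ := hIH
          linarith
    · -- limit case
      have heq : altSum f ζ x
          = sSup {y | ∃ ξ, ∃ _ : ξ < ζ, ξ % 2 = 0 ∧ altSum f ξ x = y} := by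
        rw [altSum_limit f ζ hl]
      set T := {y | ∃ ξ, ∃ _ : ξ < ζ, ξ % 2 = 0 ∧ altSum f ξ x = y} with hT
      have hmem : altSum f θ x ∈ T := ⟨θ, hlt, hθ, rfl⟩
      have hub : ∀ y ∈ T, y ≤ altSum f θ x + (f θ x - f ζ x) := by
        rintro y ⟨ξ, hξζ, hξ, rfl⟩
        have hξl : ξ ≤ lam := le_trans (le_of_lt hξζ) hζl
        rcases le_or_gt θ ξ with hθξ | hξθ
        · have h := IH ξ hξζ hξ hξl θ hθ hθξ x
          have hfζ : f ζ x ≤ f ξ x := hmono ξ ζ (le_of_lt hξζ) hζl x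
          linarith [h.2]
        · have h := IH θ hlt hθ (le_trans hθζ hζl) ξ hξ (le_of_lt hξθ) x
          have hfθζ : f ζ x ≤ f θ x := hmono θ ζ hθζ hζl x
          linarith [h.1]
      have hbdd : BddAbove T := ⟨_, hub⟩
      have h1 : altSum f θ x ≤ sSup T := le_csSup hbdd hmem
      have h2 : sSup T ≤ altSum f θ x + (f θ x - f ζ x) := csSup_le ⟨_, hmem⟩ hub
      rw [heq]
      constructor <;> linarith


theorem stmt9 {X : Type*} (lam : Ordinal.{0}) (f : Ordinal.{0} → X → ℝ)
    (hmono : ∀ η ζ : Ordinal.{0}, η ≤ ζ → ζ ≤ lam → ∀ x, f ζ x ≤ f η x)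
    (hnn : ∀ η : Ordinal.{0}, η ≤ lam → ∀ x, 0 ≤ f η x)
    (hbd : ∀ η : Ordinal.{0}, η ≤ lam → ∃ M, ∀ x, |f η x| ≤ M)
    (θ ζ : Ordinal.{0}) (hθ : θ % 2 = 0) (hζ : ζ % 2 = 0)
    (hθζ : θ ≤ ζ) (hζl : ζ ≤ lam) (x : X) :
    0 ≤ altSum f ζ x - altSum f θ x ∧
      altSum f ζ x - altSum f θ x ≤ f θ x - f ζ x :=
  altSum_key lam f hmono hnn ζ hζ hζl θ hθ hθζ x

end
end

section
/- Let f, g : X → ℝ be functions on a Polish space, U ⊆ X open, F ⊆ X closed and ε > 0 with |f(y) − g(y)| ≤ ε/4 for every y ∈ F ∩ U. Then for every countable ordinal η, D^η_{f,ε}(F) ∩ U ⊆ D^η_{g,ε/4}(F) ∩ U, where D^η denotes the η-th iterated oscillation derivative. -/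
open Set Filter Topology

noncomputable section

lemma iterD_zero' {X : Type*} (D : Set X → Set X) (F : Set X) : iterD D F 0 = F :=
  Ordinal.limitRecOn_zero _ _ _

lemma iterD_succ' {X : Type*} (D : Set X → Set X) (F : Set X) (o : Ordinal.{0}) :
    iterD D F (o + 1) = D (iterD D F o) :=
  Ordinal.limitRecOn_add_one _ _ _ _

lemma iterD_limit' {X : Type*} (D : Set X → Set X) (F : Set X) (o : Ordinal.{0})
    (ho : Order.IsSuccLimit o) : iterD D F o = ⋂ (ζ : Ordinal.{0}) (_ : ζ < o), iterD D F ζ :=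
  Ordinal.limitRecOn_limit _ _ _ _ ho

lemma iterD_subset' {X : Type*} (D : Set X → Set X) (hD : ∀ s, D s ⊆ s) (F : Set X)
    (o : Ordinal.{0}) : iterD D F o ⊆ F := by
  induction o using Ordinal.limitRecOn with
  | zero => rw [iterD_zero']
  | add_one o ih => rw [iterD_succ']; exact (hD _).trans ih
  | limit o ho ih =>
      rw [iterD_limit' _ _ _ ho]
      intro x hx
      simp only [Set.mem_iInter] at hx
      exact ih 0 ho.bot_lt (hx 0 ho.bot_lt)

theorem stmt12 {X : Type*} [TopologicalSpace X] [PolishSpace X]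
    (f g : X → ℝ) (U F : Set X) (hU : IsOpen U) (hF : IsClosed F)
    (ε : ℝ) (hε : 0 < ε) (h : ∀ y ∈ F ∩ U, |f y - g y| ≤ ε / 4)
    (η : Ordinal.{0}) (hη : η.card ≤ Cardinal.aleph0) :
    iterD (oscDeriv f ε) F η ∩ U ⊆ iterD (oscDeriv g (ε / 4)) F η ∩ U := by
  clear hη
  have hsub : ∀ s : Set X, oscDeriv g (ε / 4) s ⊆ s := fun s => Set.sep_subset _ _
  have hsubf : ∀ s : Set X, oscDeriv f ε s ⊆ s := fun s => Set.sep_subset _ _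
  induction η using Ordinal.limitRecOn with
  | zero => rw [iterD_zero', iterD_zero']
  | add_one o ih =>
      rw [iterD_succ', iterD_succ']
      rintro x ⟨⟨hxS, hosc⟩, hxU⟩
      set Sf := iterD (oscDeriv f ε) F o with hSf
      set Sg := iterD (oscDeriv g (ε / 4)) F o with hSg
      have hxSg : x ∈ Sg := (ih ⟨hxS, hxU⟩).1
      refine ⟨⟨hxSg, ?_⟩, hxU⟩
      refine le_iInf fun V => le_iInf fun hV => le_iInf fun hxV => ?_
      -- use V ∩ U as test open set for f
      have key : ENNReal.ofReal ε ≤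
          ⨆ (y) (_ : y ∈ (V ∩ U) ∩ Sf) (z) (_ : z ∈ (V ∩ U) ∩ Sf),
            ENNReal.ofReal |f y - f z| := by
        refine le_trans hosc ?_
        refine iInf_le_of_le (V ∩ U) ?_
        refine iInf_le_of_le (hV.inter hU) ?_
        exact iInf_le _ ⟨hxV, hxU⟩
      have step : (⨆ (y) (_ : y ∈ (V ∩ U) ∩ Sf) (z) (_ : z ∈ (V ∩ U) ∩ Sf),
            ENNReal.ofReal |f y - f z|) ≤
          (⨆ (y) (_ : y ∈ V ∩ Sg) (z) (_ : z ∈ V ∩ Sg),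
            ENNReal.ofReal |g y - g z|) + ENNReal.ofReal (ε / 2) := by
        refine iSup₂_le fun y hy => iSup₂_le fun z hz => ?_
        have hyF : y ∈ F ∩ U := ⟨iterD_subset' _ hsubf F o hy.2, hy.1.2⟩
        have hzF : z ∈ F ∩ U := ⟨iterD_subset' _ hsubf F o hz.2, hz.1.2⟩
        have hyg : y ∈ V ∩ Sg := ⟨hy.1.1, (ih ⟨hy.2, hy.1.2⟩).1⟩
        have hzg : z ∈ V ∩ Sg := ⟨hz.1.1, (ih ⟨hz.2, hz.1.2⟩).1⟩
        have habs : |f y - f z| ≤ |g y - g z| + ε / 2 := by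
          have t1 := abs_sub_le (f y) (g y) (f z)
          have t2 := abs_sub_le (g y) (g z) (f z)
          have h2' : |g z - f z| = |f z - g z| := abs_sub_comm _ _
          linarith [h y hyF, h z hzF]
        calc ENNReal.ofReal |f y - f z| ≤ ENNReal.ofReal (|g y - g z| + ε / 2) :=
              ENNReal.ofReal_le_ofReal habs
          _ = ENNReal.ofReal |g y - g z| + ENNReal.ofReal (ε / 2) :=
              ENNReal.ofReal_add (abs_nonneg _) (by linarith)
          _ ≤ _ + ENNReal.ofReal (ε / 2) := by
              gcongr
              exact le_iSup₂_of_le y hyg (le_iSup₂_of_le z hzg le_rfl)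
      have : ENNReal.ofReal ε ≤
          (⨆ (y) (_ : y ∈ V ∩ Sg) (z) (_ : z ∈ V ∩ Sg),
            ENNReal.ofReal |g y - g z|) + ENNReal.ofReal (ε / 2) := key.trans step
      have hfinal : ENNReal.ofReal ε - ENNReal.ofReal (ε / 2) ≤
          ⨆ (y) (_ : y ∈ V ∩ Sg) (z) (_ : z ∈ V ∩ Sg), ENNReal.ofReal |g y - g z| :=
        tsub_le_iff_right.mpr this
      calc ENNReal.ofReal (ε / 4) ≤ ENNReal.ofReal (ε - ε / 2) :=
            ENNReal.ofReal_le_ofReal (by linarith)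
        _ = ENNReal.ofReal ε - ENNReal.ofReal (ε / 2) :=
            ENNReal.ofReal_sub _ (by linarith)
        _ ≤ _ := hfinal
  | limit o ho ih =>
      rw [iterD_limit' _ _ _ ho, iterD_limit' _ _ _ ho]
      rintro x ⟨hx, hxU⟩
      rw [Set.mem_iInter₂] at hx
      exact ⟨Set.mem_iInter₂.mpr fun ζ hζ => (ih ζ hζ ⟨hx ζ hζ, hxU⟩).1, hxU⟩

end
end
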